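/- arXiv:2210.09979 — 5 statements merged into one kernel-verified Lean document; each statement's English description precedes it below -/
import Mathlib

section
/- For a positive integer d and any partition a_1 + a_2 + ... + a_p = d with p ≥ 2 and each a_i ≥ 1, one has (d - a_1)·(d - a_2)·...·(d - a_p) ≥ (d - 1)·d^(p-2). -/
/-- Key merging inequality: `d*(d-(a+b)) ≤ (d-a)*(d-b)` in `ℕ`. -/
lemma key_merge (d a b : ℕ) (hA : a ≤ d) (hB : b ≤ d) :
    d * (d - (a + b)) ≤ (d - a) * (d - b) := by
  rcases le_or_gt d (a + b) with h | h
  · simp [Nat.sub_eq_zero_of_le h]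
  · zify [hA, hB, le_of_lt h]
    nlinarith [mul_nonneg (Int.ofNat_nonneg a) (Int.ofNat_nonneg b)]

lemma aux_list (d : ℕ) : ∀ (t : List ℕ) (a b : ℕ), 1 ≤ a → 1 ≤ b →
    (∀ x ∈ t, 1 ≤ x) → a + b + t.sum = d →
    (d - 1) * d ^ t.length ≤ (d - a) * (d - b) * (t.map (d - ·)).prod := by
  intro t
  induction t with
  | nil =>
    intro a b ha hb _ hsum
    simp only [List.sum_nil, Nat.add_zero] at hsum
    simp only [List.length_nil, pow_zero, List.map_nil, List.prod_nil, mul_one]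
    have h1 : d - a = b := by omega
    have h2 : d - b = a := by omega
    rw [h1, h2]
    have : a + b ≤ b * a + 1 := by nlinarith
    omega
  | cons c t' ih =>
    intro a b ha hb hmem hsum
    have hc : 1 ≤ c := hmem c (by simp)
    have hmem' : ∀ x ∈ t', 1 ≤ x := fun x hx => hmem x (by simp [hx])
    have hsum' : (a + b) + c + t'.sum = d := by
      simp only [List.sum_cons] at hsum; omega
    have H := ih (a + b) c (by omega) hc hmem' hsum'
    have hA : a ≤ d := by
      have := t'.sum_nonneg (by intro x _; positivity)
      omega
    have hB : b ≤ d := by omega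
    calc (d - 1) * d ^ (c :: t').length
        = d * ((d - 1) * d ^ t'.length) := by
          simp only [List.length_cons]; ring
      _ ≤ d * ((d - (a + b)) * (d - c) * (t'.map (d - ·)).prod) :=
          Nat.mul_le_mul_left d H
      _ = (d * (d - (a + b))) * ((d - c) * (t'.map (d - ·)).prod) := by ring
      _ ≤ ((d - a) * (d - b)) * ((d - c) * (t'.map (d - ·)).prod) :=
          Nat.mul_le_mul_right _ (key_merge d a b hA hB)
      _ = (d - a) * (d - b) * ((c :: t').map (d - ·)).prod := by
          simp only [List.map_cons, List.prod_cons]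

/-- For a positive integer `d` and any partition `a 0 + ... + a (p-1) = d`
with `p ≥ 2` and each `a i ≥ 1`, one has
`(d - 1) * d^(p-2) ≤ ∏ i, (d - a i)`. -/
theorem partition_product_lower_bound_full
    (d p : ℕ) (hd : 0 < d) (hp : 2 ≤ p)
    (a : Fin p → ℕ) (ha : ∀ i, 1 ≤ a i) (hsum : ∑ i, a i = d) :
    (d - 1) * d ^ (p - 2) ≤ ∏ i, (d - a i) := by
  obtain ⟨q, rfl⟩ : ∃ q, p = q + 2 := ⟨p - 2, by omega⟩
  -- convert to list form
  have hprod : ∏ i, (d - a i) = (List.ofFn (fun i => d - a i)).prod := by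
    rw [List.prod_ofFn]
  rw [hprod]
  have : List.ofFn (fun i : Fin (q + 2) => d - a i)
      = ((List.ofFn a).map (d - ·)) := by
    rw [List.map_ofFn]; rfl
  rw [this]
  have hsum' : (List.ofFn a).sum = d := by rw [List.sum_ofFn]; exact hsum
  -- peel off first two elements
  rcases hofn : List.ofFn a with _ | ⟨x, _ | ⟨y, t⟩⟩
  · exact absurd (congrArg List.length hofn) (by simp)
  · exact absurd (congrArg List.length hofn) (by simp)
  · have hmem : ∀ z ∈ List.ofFn a, 1 ≤ z := by
      intro z hz
      rw [List.mem_ofFn] at hz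
      obtain ⟨i, rfl⟩ := hz
      exact ha i
    rw [hofn] at hmem hsum'
    have hlen : t.length = q := by
      have := congrArg List.length hofn
      simpa using this.symm
    have hx : 1 ≤ x := hmem x (by simp)
    have hy : 1 ≤ y := hmem y (by simp)
    have hmt : ∀ z ∈ t, 1 ≤ z := fun z hz => hmem z (by simp [hz])
    have hs : x + y + t.sum = d := by
      simp only [List.sum_cons] at hsum'; omega
    have := aux_list d t x y hx hy hmt hs
    rw [hlen] at this
    simpa [List.map_cons, List.prod_cons, mul_assoc, Nat.add_sub_cancel] using this
end

section
/- Let Θ = {θ_1, ..., θ_K} ⊂ (0,1)^d where θ_k = (t_k^(1), ..., t_k^(d)). For each function f : [K] → [d] (assigning each index k a coordinate), suppose there exist continuous nonnegative functions q_{f,i} : [0,1] → ℝ (for i ∈ [d]) such that q_{f,i} vanishes exactly on {t_k^(i) : f(k) = i}. Then Q(t_1,...,t_d) := Σ over all ordered partitions π = (Ω_1,...,Ω_d) of [K] into d (possibly empty) parts of the products q_{π,1}(t_1)·...·q_{π,d}(t_d) is nonnegative on [0,1]^d and vanishes exactly on Θ. -/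
/-- Let `Θ = {θ_1, ..., θ_K} ⊂ (0,1)^d` be distinct points. For each ordered
partition `f : [K] → [d]` suppose there are continuous nonnegative functions
`q f i : [0,1] → ℝ` vanishing exactly on `{t_k^(i) : f k = i}`. Then
`Q t = Σ_f ∏_i (q f i) (t i)` is nonnegative on `[0,1]^d` and vanishes exactly
on `Θ`. -/
theorem sum_over_partitions_dual_certificate
    {K d : ℕ} (θ : Fin K → Fin d → ℝ) (hθdist : Function.Injective θ)
    (hθint : ∀ k i, θ k i ∈ Set.Ioo (0 : ℝ) 1)
    (q : (Fin K → Fin d) → Fin d → ℝ → ℝ)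
    (hqc : ∀ f i, ContinuousOn (q f i) (Set.Icc (0 : ℝ) 1))
    (hq0 : ∀ f i, ∀ t ∈ Set.Icc (0 : ℝ) 1, 0 ≤ q f i t)
    (hqv : ∀ f i, ∀ t ∈ Set.Icc (0 : ℝ) 1,
      (q f i t = 0 ↔ ∃ k, f k = i ∧ θ k i = t)) :
    ∀ t : Fin d → ℝ, (∀ i, t i ∈ Set.Icc (0 : ℝ) 1) →
      (0 ≤ ∑ f : Fin K → Fin d, ∏ i, q f i (t i)) ∧
      ((∑ f : Fin K → Fin d, ∏ i, q f i (t i)) = 0 ↔ ∃ k, t = θ k) := by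
  intro t ht
  have hnn : ∀ f : Fin K → Fin d, 0 ≤ ∏ i, q f i (t i) := fun f =>
    Finset.prod_nonneg fun i _ => hq0 f i (t i) (ht i)
  refine ⟨Finset.sum_nonneg fun f _ => hnn f, ?_, ?_⟩
  · intro hsum
    by_contra hne
    push_neg at hne
    have hex : ∀ k, ∃ i, θ k i ≠ t i := by
      intro k
      by_contra h
      push_neg at h
      exact hne k (funext fun i => (h i).symm)
    choose f hf using hex
    have hpos : 0 < ∏ i, q f i (t i) := by
      apply Finset.prod_pos
      intro i _
      rcases lt_or_eq_of_le (hq0 f i (t i) (ht i)) with h | h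
      · exact h
      · exfalso
        obtain ⟨k, hk1, hk2⟩ := (hqv f i (t i) (ht i)).mp h.symm
        subst hk1
        exact hf k hk2
    have := Finset.single_le_sum (f := fun g : Fin K → Fin d => ∏ i, q g i (t i))
      (fun g _ => hnn g) (Finset.mem_univ f)
    linarith
  · rintro ⟨k, rfl⟩
    apply Finset.sum_eq_zero
    intro f _
    apply Finset.prod_eq_zero (Finset.mem_univ (f k))
    exact (hqv f (f k) (θ k (f k)) (ht (f k))).mpr ⟨k, rfl, rfl⟩
end

section
/- The generalized Wasserstein distance d_GW(μ₁, μ₂) = inf{‖μ₁ − z₁‖_TV + W₁(z₁, z₂) + ‖μ₂ − z₂‖_TV : z₁, z₂ ≥ 0, z₁(X) = z₂(X)} satisfies the triangle inequality: d_GW(μ₁, μ₃) ≤ d_GW(μ₁, μ₂) + d_GW(μ₂, μ₃) for all finite nonnegative Borel measures μ₁, μ₂, μ₃ on a compact metric space X. -/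
open MeasureTheory ENNReal

/-- Total variation distance `‖μ − ν‖_TV` of two (finite) nonnegative measures,
via the Jordan-type decomposition `(μ − ν)(X) + (ν − μ)(X)` using truncated
subtraction of measures. -/
noncomputable def tvDist {X : Type*} [MeasurableSpace X] (μ ν : Measure X) : ℝ≥0∞ :=
  (μ - ν) Set.univ + (ν - μ) Set.univ

/-- The 1-Wasserstein distance between nonnegative measures, as the infimum of
`∫ dist` over couplings (it is `∞` if no coupling exists). -/
noncomputable def W1 {X : Type*} [MeasurableSpace X] [PseudoEMetricSpace X]
    (μ ν : Measure X) : ℝ≥0∞ :=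
  ⨅ (γ : Measure (X × X)) (_ : γ.map Prod.fst = μ ∧ γ.map Prod.snd = ν),
    ∫⁻ p, edist p.1 p.2 ∂γ

/-- The generalized Wasserstein distance
`d_GW(μ, ν) = inf {‖μ − z₁‖_TV + W₁(z₁, z₂) + ‖ν − z₂‖_TV}` over nonnegative
measures `z₁, z₂` of equal total mass. -/
noncomputable def dGW {X : Type*} [MeasurableSpace X] [PseudoEMetricSpace X]
    (μ ν : Measure X) : ℝ≥0∞ :=
  ⨅ (z₁ : Measure X) (z₂ : Measure X) (_ : z₁ Set.univ = z₂ Set.univ),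
    tvDist μ z₁ + W1 z₁ z₂ + tvDist ν z₂

section AuxLemmas

open ProbabilityTheory

variable {X : Type*} [MeasurableSpace X]

lemma le_sub_add_fin (μ ν : Measure X) [IsFiniteMeasure μ] [IsFiniteMeasure ν] :
    μ ≤ (μ - ν) + ν := by
  obtain ⟨s, hs, hle, hge⟩ := hahn_decomposition (μ := μ) (ν := ν)
  rw [Measure.le_iff]
  intro t ht
  have h1 : ν.restrict s ≤ μ.restrict s := by
    rw [Measure.le_iff]
    intro u hu
    rw [Measure.restrict_apply hu, Measure.restrict_apply hu]
    exact hle _ (hu.inter hs) Set.inter_subset_right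
  have h2 : (μ - ν) (t ∩ s) = μ (t ∩ s) - ν (t ∩ s) := by
    have h3 : (μ - ν) (t ∩ s) = ((μ - ν).restrict s) t := by
      rw [Measure.restrict_apply ht]
    rw [h3, Measure.restrict_sub_eq_restrict_sub_restrict hs,
      Measure.sub_apply ht h1, Measure.restrict_apply ht, Measure.restrict_apply ht]
  have h4 : μ (t ∩ s) ≤ (μ - ν) (t ∩ s) + ν (t ∩ s) := by
    rw [h2]; exact le_tsub_add
  have h5 : μ (t \ s) ≤ ν (t \ s) := hge _ (ht.diff hs) (Set.diff_subset_iff.2 (by simp))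
  calc μ t = μ (t ∩ s) + μ (t \ s) := (measure_inter_add_diff t hs).symm
    _ ≤ ((μ - ν) (t ∩ s) + ν (t ∩ s)) + ν (t \ s) := add_le_add h4 h5
    _ = (μ - ν) (t ∩ s) + (ν (t ∩ s) + ν (t \ s)) := by ring
    _ ≤ (μ - ν) t + ν t := by
        rw [measure_inter_add_diff t hs]
        exact add_le_add_left (measure_mono (μ := μ - ν) Set.inter_subset_left) _

lemma sub_apply_ge (ρ ν : Measure X) [IsFiniteMeasure ν] {s : Set X}
    (hs : MeasurableSet s) (hfin : ρ s ≠ ∞) : ρ s - ν s ≤ (ρ - ν) s := by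
  haveI h1 : IsFiniteMeasure (ρ.restrict s) :=
    ⟨by rwa [Measure.restrict_apply_univ, lt_top_iff_ne_top]⟩
  have h3 := le_sub_add_fin (ρ.restrict s) (ν.restrict s) Set.univ
  rw [Measure.coe_add, Pi.add_apply, Measure.restrict_apply_univ,
    ← Measure.restrict_sub_eq_restrict_sub_restrict hs, Measure.restrict_apply_univ,
    Measure.restrict_apply_univ] at h3
  exact tsub_le_iff_right.2 h3

lemma isFiniteMeasure_of_sub {ρ ν : Measure X} [IsFiniteMeasure ν]
    (h : (ρ - ν) Set.univ ≠ ∞) : IsFiniteMeasure ρ := by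
  by_contra hinf
  have hρ : ρ Set.univ = ∞ := by
    by_contra h'
    exact hinf ⟨lt_top_iff_ne_top.2 h'⟩
  apply h
  set c := ⨆ (s : Set X) (_ : MeasurableSet s) (_ : ρ s ≠ ∞), ρ s with hc
  rcases eq_or_ne c ∞ with hctop | hcfin
  · -- the sup of finite parts is infinite
    exfalso
    have hlt : (ρ - ν) Set.univ + ν Set.univ + 1 < c := by
      rw [hctop]
      exact lt_top_iff_ne_top.2 (by
        simp [ENNReal.add_ne_top, h, measure_ne_top ν Set.univ])
    rw [hc] at hlt
    simp only [lt_iSup_iff] at hlt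
    obtain ⟨s, hsm, hsf, hlt⟩ := hlt
    have h4 := sub_apply_ge ρ ν hsm hsf
    have h5 : (ρ - ν) Set.univ + 1 ≤ (ρ - ν) s := by
      refine le_trans (ENNReal.le_sub_of_add_le_right (measure_ne_top ν s) ?_) h4
      calc (ρ - ν) Set.univ + 1 + ν s
          ≤ (ρ - ν) Set.univ + ν Set.univ + 1 := by
            rw [add_right_comm]
            exact add_le_add_left (add_le_add_right
              (measure_mono (μ := ν) (Set.subset_univ s)) ((ρ - ν) Set.univ)) 1
        _ ≤ ρ s := hlt.le
    have h6 := h5.trans (measure_mono (Set.subset_univ s))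
    exact (ENNReal.lt_add_right h one_ne_zero).not_ge h6
  · -- c finite : split off the sup-attaining set
    have hex : ∀ n : ℕ, ∃ s : Set X, MeasurableSet s ∧ ρ s ≠ ∞ ∧ c - ((n : ℝ≥0∞)+1)⁻¹ ≤ ρ s := by
      intro n
      rcases eq_or_ne c 0 with hc0 | hc0
      · exact ⟨∅, MeasurableSet.empty, by simp, by simp [hc0, zero_tsub]⟩
      · have hlt : c - ((n : ℝ≥0∞)+1)⁻¹ < c := by
          apply ENNReal.sub_lt_self hcfin hc0
          simp
        nth_rewrite 2 [hc] at hlt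
        simp only [lt_iSup_iff] at hlt
        obtain ⟨s, hsm, hsf, hlt⟩ := hlt
        exact ⟨s, hsm, hsf, hlt.le⟩
    choose sn hsnm hsnf hsnge using hex
    set U : ℕ → Set X := fun n => ⋃ k ∈ Finset.range (n+1), sn k with hU
    have hUm : ∀ n, MeasurableSet (U n) := fun n =>
      (Finset.range (n+1)).measurableSet_biUnion (fun k _ => hsnm k)
    have hUf : ∀ n, ρ (U n) ≠ ∞ := by
      intro n
      exact (measure_biUnion_lt_top (Finset.range (n+1)).finite_toSet
        (fun k _ => lt_top_iff_ne_top.2 (hsnf k))).ne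
    have hUle : ∀ n, ρ (U n) ≤ c := by
      intro n
      rw [hc]
      exact le_iSup_of_le (U n) (le_iSup_of_le (hUm n) (le_iSup_of_le (hUf n) le_rfl))
    have hUmono : Monotone U := by
      intro a b hab
      exact Set.biUnion_subset_biUnion_left
        (Finset.coe_subset.2 (Finset.range_subset_range.2 (by omega)))
    set s' : Set X := ⋃ n, U n with hs'
    have hs'm : MeasurableSet s' := MeasurableSet.iUnion hUm
    have hs'le : ρ s' ≤ c := by
      rw [hs', hUmono.directed_le.measure_iUnion]
      exact iSup_le hUle
    have hs'f : ρ s' ≠ ∞ := (hs'le.trans_lt (lt_top_iff_ne_top.2 hcfin)).ne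
    have hs'ge : c ≤ ρ s' := by
      apply ENNReal.le_of_forall_pos_le_add
      intro ε hε _
      obtain ⟨n, hn⟩ := ENNReal.exists_inv_nat_lt (by exact_mod_cast hε.ne' : (ε : ℝ≥0∞) ≠ 0)
      have h8 : c - ((n : ℝ≥0∞)+1)⁻¹ ≤ ρ s' := by
        refine (hsnge n).trans (measure_mono ?_)
        intro x hx
        exact Set.mem_iUnion.2 ⟨n, Set.mem_biUnion (Finset.self_mem_range_succ n) hx⟩
      have h9 : c ≤ ρ s' + ((n : ℝ≥0∞)+1)⁻¹ := tsub_le_iff_right.1 h8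
      refine h9.trans (add_le_add_right ?_ _)
      refine le_trans ?_ hn.le
      gcongr
      exact le_self_add
    have hs'c : ρ s' = c := le_antisymm hs'le hs'ge
    -- the complement u is "purely infinite"
    set u : Set X := s'ᶜ with hu
    have hum : MeasurableSet u := hs'm.compl
    have huinf : ρ u = ∞ := by
      by_contra h'
      have h10 := measure_union_lt_top (lt_top_iff_ne_top.2 hs'f) (lt_top_iff_ne_top.2 h')
      rw [Set.union_compl_self] at h10
      exact h10.ne hρ
    have hpure : ∀ w : Set X, MeasurableSet w → w ⊆ u → ρ w ≠ ∞ → ρ w = 0 := by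
      intro w hwm hwu hwf
      have hdisj : Disjoint s' w := Disjoint.mono_right hwu disjoint_compl_right
      have h11 : ρ (s' ∪ w) = c + ρ w := by
        rw [measure_union hdisj hwm, hs'c]
      have h12 : ρ (s' ∪ w) ≤ c := by
        rw [hc]
        refine le_iSup_of_le (s' ∪ w) (le_iSup_of_le (hs'm.union hwm)
          (le_iSup_of_le (by rw [h11]; exact ENNReal.add_ne_top.2 ⟨hcfin, hwf⟩) le_rfl))
      rw [h11] at h12
      have h14 : c + ρ w ≤ c + 0 := by rw [add_zero]; exact h12
      exact le_antisymm ((ENNReal.add_le_add_iff_left hcfin).1 h14) zero_le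
    -- lower bound measure
    set e : Measure X := (∞ : ℝ≥0∞) • ρ.restrict u with he
    have hle : e ≤ ρ - ν := by
      rw [Measure.sub_def]
      apply le_sInf
      intro d hd
      rw [Set.mem_setOf_eq] at hd
      rw [Measure.le_iff]
      intro w hwm
      have hew : e w = ∞ * ρ (w ∩ u) := by
        rw [he, Measure.smul_apply, smul_eq_mul, Measure.restrict_apply hwm]
      rcases eq_or_ne (ρ (w ∩ u)) 0 with h0 | h0
      · rw [hew, h0, mul_zero]; exact zero_le
      · have hwin : ρ (w ∩ u) = ∞ := by
          by_contra h'
          exact h0 (hpure _ (hwm.inter hum) Set.inter_subset_right h')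
        have h13 : ρ (w ∩ u) ≤ d (w ∩ u) + ν (w ∩ u) := by
          have := hd (w ∩ u)
          simpa using this
        have hd1 : d (w ∩ u) = ∞ := by
          by_contra h'
          rw [hwin] at h13
          exact (ENNReal.add_ne_top.2 ⟨h', measure_ne_top ν _⟩) (top_le_iff.1 h13)
        have : d w = ∞ := top_le_iff.1 (hd1 ▸ measure_mono Set.inter_subset_left)
        rw [this]
        exact le_top
    rw [eq_top_iff]
    calc (⊤ : ℝ≥0∞) = e Set.univ := by
          rw [he, Measure.smul_apply, smul_eq_mul, Measure.restrict_apply_univ, huinf]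
          simp
      _ ≤ (ρ - ν) Set.univ := hle Set.univ

lemma sub_mono' {μ μ' ν ν' : Measure X} [IsFiniteMeasure μ'] [IsFiniteMeasure ν']
    (h1 : μ ≤ μ') (h2 : ν' ≤ ν) : μ - ν ≤ μ' - ν' :=
  Measure.sub_le_of_le_add (h1.trans ((le_sub_add_fin μ' ν').trans (add_le_add_right h2 _)))

lemma tvDist_comm (a b : Measure X) : tvDist a b = tvDist b a := add_comm _ _

lemma tvDist_triangle (a b c : Measure X) [IsFiniteMeasure a] [IsFiniteMeasure b]
    [IsFiniteMeasure c] : tvDist a c ≤ tvDist a b + tvDist b c := by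
  have h1 : a - c ≤ (a - b) + (b - c) := by
    apply Measure.sub_le_of_le_add
    calc a ≤ (a - b) + b := le_sub_add_fin a b
      _ ≤ (a - b) + ((b - c) + c) := add_le_add_right (le_sub_add_fin b c) _
      _ = (a - b) + (b - c) + c := (add_assoc _ _ _).symm
  have h2 : c - a ≤ (c - b) + (b - a) := by
    apply Measure.sub_le_of_le_add
    calc c ≤ (c - b) + b := le_sub_add_fin c b
      _ ≤ (c - b) + ((b - a) + a) := add_le_add_right (le_sub_add_fin b a) _
      _ = (c - b) + (b - a) + a := (add_assoc _ _ _).symm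
  calc tvDist a c = (a - c) Set.univ + (c - a) Set.univ := rfl
    _ ≤ ((a - b) + (b - c)) Set.univ + ((c - b) + (b - a)) Set.univ :=
        add_le_add (h1 Set.univ) (h2 Set.univ)
    _ = ((a - b) Set.univ + (b - a) Set.univ) + ((b - c) Set.univ + (c - b) Set.univ) := by
        simp only [Measure.coe_add, Pi.add_apply]; ring
    _ = tvDist a b + tvDist b c := rfl

lemma tvDist_shrink (a : Measure X) {b b' : Measure X} [IsFiniteMeasure a] [IsFiniteMeasure b]
    (h : b' ≤ b) : tvDist a b' ≤ tvDist a b + (b Set.univ - b' Set.univ) := by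
  haveI : IsFiniteMeasure b' := isFiniteMeasure_of_le b h
  have h1 : b' - a ≤ b - a := sub_mono' h le_rfl
  have h2 : a - b' ≤ (a - b) + (b - b') := by
    apply Measure.sub_le_of_le_add
    calc a ≤ (a - b) + b := le_sub_add_fin a b
      _ = (a - b) + ((b - b') + b') := by rw [Measure.sub_add_cancel_of_le h]
      _ = (a - b) + (b - b') + b' := (add_assoc _ _ _).symm
  have h3 : (b - b') Set.univ = b Set.univ - b' Set.univ :=
    Measure.sub_apply MeasurableSet.univ h
  calc tvDist a b' = (a - b') Set.univ + (b' - a) Set.univ := rfl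
    _ ≤ ((a - b) + (b - b')) Set.univ + (b - a) Set.univ :=
        add_le_add (h2 Set.univ) (h1 Set.univ)
    _ = ((a - b) Set.univ + (b - a) Set.univ) + (b - b') Set.univ := by
        simp only [Measure.coe_add, Pi.add_apply]; ring
    _ = tvDist a b + (b Set.univ - b' Set.univ) := by rw [h3]; rfl

lemma exists_min_measure (z w : Measure X) [IsFiniteMeasure z] [IsFiniteMeasure w] :
    ∃ m : Measure X, m ≤ z ∧ m ≤ w ∧
      z Set.univ ≤ (z - w) Set.univ + m Set.univ ∧
      w Set.univ ≤ (w - z) Set.univ + m Set.univ := by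
  obtain ⟨s, hs, h1, h2⟩ := hahn_decomposition (μ := z) (ν := w)
  refine ⟨w.restrict s + z.restrict sᶜ, ?_, ?_, ?_, ?_⟩
  · rw [Measure.le_iff]
    intro t ht
    rw [Measure.coe_add, Pi.add_apply, Measure.restrict_apply ht, Measure.restrict_apply ht]
    calc w (t ∩ s) + z (t ∩ sᶜ) ≤ z (t ∩ s) + z (t ∩ sᶜ) :=
          add_le_add_left (h1 _ (ht.inter hs) Set.inter_subset_right) _
      _ = z t := by rw [← Set.diff_eq, measure_inter_add_diff t hs]
  · rw [Measure.le_iff]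
    intro t ht
    rw [Measure.coe_add, Pi.add_apply, Measure.restrict_apply ht, Measure.restrict_apply ht]
    calc w (t ∩ s) + z (t ∩ sᶜ) ≤ w (t ∩ s) + w (t ∩ sᶜ) :=
          add_le_add_right (h2 _ (ht.inter hs.compl) Set.inter_subset_right) _
      _ = w t := by rw [← Set.diff_eq, measure_inter_add_diff t hs]
  · have hm : (w.restrict s + z.restrict sᶜ) Set.univ = w s + z sᶜ := by
      rw [Measure.coe_add, Pi.add_apply, Measure.restrict_apply_univ,
        Measure.restrict_apply_univ]
    rw [hm]
    have h3 : z s ≤ (z - w) Set.univ + w s := by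
      calc z s ≤ (z s - w s) + w s := le_tsub_add
        _ ≤ (z - w) s + w s := add_le_add_left (sub_apply_ge z w hs (measure_ne_top z s)) _
        _ ≤ (z - w) Set.univ + w s :=
            add_le_add_left (measure_mono (Set.subset_univ s)) _
    calc z Set.univ = z s + z sᶜ := (measure_add_measure_compl hs).symm
      _ ≤ ((z - w) Set.univ + w s) + z sᶜ := add_le_add_left h3 _
      _ = (z - w) Set.univ + (w s + z sᶜ) := add_assoc _ _ _
  · have hm : (w.restrict s + z.restrict sᶜ) Set.univ = w s + z sᶜ := by
      rw [Measure.coe_add, Pi.add_apply, Measure.restrict_apply_univ,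
        Measure.restrict_apply_univ]
    rw [hm]
    have h3 : w sᶜ ≤ (w - z) Set.univ + z sᶜ := by
      calc w sᶜ ≤ (w sᶜ - z sᶜ) + z sᶜ := le_tsub_add
        _ ≤ (w - z) sᶜ + z sᶜ :=
            add_le_add_left (sub_apply_ge w z hs.compl (measure_ne_top w sᶜ)) _
        _ ≤ (w - z) Set.univ + z sᶜ :=
            add_le_add_left (measure_mono (Set.subset_univ sᶜ)) _
    calc w Set.univ = w s + w sᶜ := (measure_add_measure_compl hs).symm
      _ ≤ w s + ((w - z) Set.univ + z sᶜ) := add_le_add_right h3 _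
      _ = (w - z) Set.univ + (w s + z sᶜ) := by ring

section Couplings

variable [StandardBorelSpace X] [Nonempty X]

lemma coupling_restrict (γ : Measure (X × X)) [IsFiniteMeasure γ]
    {m : Measure X} (hm : m ≤ γ.map Prod.snd) :
    ∃ γ' : Measure (X × X), γ' ≤ γ ∧ γ'.map Prod.snd = m ∧ γ'.map Prod.fst ≤ γ.map Prod.fst := by
  haveI : IsFiniteMeasure (γ.map Prod.snd) := by
    constructor
    rw [Measure.map_apply measurable_snd MeasurableSet.univ]
    exact measure_lt_top γ _
  haveI : IsFiniteMeasure m := isFiniteMeasure_of_le _ hm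
  set ρ := γ.map Prod.swap with hρ
  haveI : IsFiniteMeasure ρ := by
    constructor
    rw [hρ, Measure.map_apply measurable_swap MeasurableSet.univ]
    exact measure_lt_top γ _
  have hfst : ρ.fst = γ.map Prod.snd := by
    rw [Measure.fst, hρ, Measure.map_map measurable_fst measurable_swap]
    rfl
  set κ := ρ.condKernel with hκ
  have hdis : ρ.fst ⊗ₘ κ = ρ := Measure.IsCondKernel.disintegrate
  have hmono : m ⊗ₘ κ ≤ ρ.fst ⊗ₘ κ := by
    rw [Measure.le_iff]
    intro s hs
    rw [Measure.compProd_apply hs, Measure.compProd_apply hs]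
    exact lintegral_mono' (hfst ▸ hm) le_rfl
  have hswap : ρ.map Prod.swap = γ := by
    rw [hρ, Measure.map_map measurable_swap measurable_swap]
    simp [Prod.swap_swap_eq]
  refine ⟨(m ⊗ₘ κ).map Prod.swap, ?_, ?_, ?_⟩
  · calc (m ⊗ₘ κ).map Prod.swap ≤ (ρ.fst ⊗ₘ κ).map Prod.swap :=
          Measure.map_mono hmono measurable_swap
      _ = γ := by rw [hdis, hswap]
  · rw [Measure.map_map measurable_snd measurable_swap]
    have : (Prod.snd ∘ Prod.swap : X × X → X) = Prod.fst := rfl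
    rw [this]
    exact Measure.fst_compProd m κ
  · apply Measure.map_mono _ measurable_fst
    calc (m ⊗ₘ κ).map Prod.swap ≤ (ρ.fst ⊗ₘ κ).map Prod.swap :=
          Measure.map_mono hmono measurable_swap
      _ = γ := by rw [hdis, hswap]

lemma coupling_glue [PseudoEMetricSpace X]
    (γ₁ γ₂ : Measure (X × X)) [IsFiniteMeasure γ₁] [IsFiniteMeasure γ₂]
    (hme : Measurable (fun p : X × X => edist p.1 p.2))
    (h : γ₁.map Prod.snd = γ₂.map Prod.fst) :
    ∃ η : Measure (X × X), η.map Prod.fst = γ₁.map Prod.fst ∧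
      η.map Prod.snd = γ₂.map Prod.snd ∧
      ∫⁻ p, edist p.1 p.2 ∂η ≤ ∫⁻ p, edist p.1 p.2 ∂γ₁ + ∫⁻ p, edist p.1 p.2 ∂γ₂ := by
  set m := γ₂.map Prod.fst with hm
  set ρ₁ := γ₁.map Prod.swap with hρ₁
  haveI : IsFiniteMeasure ρ₁ := by
    constructor
    rw [hρ₁, Measure.map_apply measurable_swap MeasurableSet.univ]
    exact measure_lt_top γ₁ _
  haveI : IsFiniteMeasure m := by
    constructor
    rw [hm, Measure.map_apply measurable_fst MeasurableSet.univ]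
    exact measure_lt_top γ₂ _
  have hρ₁fst : ρ₁.fst = m := by
    rw [Measure.fst, hρ₁, Measure.map_map measurable_fst measurable_swap]
    exact h
  have hγ₂fst : γ₂.fst = m := rfl
  set κ₁ := ρ₁.condKernel with hκ₁
  set κ₂ := γ₂.condKernel with hκ₂
  have hd₁ : m ⊗ₘ κ₁ = ρ₁ := by rw [← hρ₁fst]; exact Measure.IsCondKernel.disintegrate
  have hd₂ : m ⊗ₘ κ₂ = γ₂ := by rw [← hγ₂fst]; exact Measure.IsCondKernel.disintegrate
  have hprodx : ∀ x, (κ₁ ×ₖ κ₂) x = (κ₁ x).prod (κ₂ x) := fun x => Kernel.prod_apply κ₁ κ₂ x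
  refine ⟨m.bind (⇑(κ₁ ×ₖ κ₂)), ?_, ?_, ?_⟩
  · ext t ht
    rw [Measure.map_apply measurable_fst ht,
      Measure.bind_apply (measurable_fst ht) (Kernel.measurable _).aemeasurable]
    have h1 : ∀ x, (κ₁ ×ₖ κ₂) x (Prod.fst ⁻¹' t) = κ₁ x t := by
      intro x
      rw [hprodx x, ← Measure.map_apply measurable_fst ht, ← Measure.fst,
        Measure.fst_prod]
    simp_rw [h1]
    have h2 : γ₁.map Prod.fst t = ρ₁.map Prod.snd t := by
      rw [hρ₁, Measure.map_map measurable_snd measurable_swap]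
      rfl
    rw [h2, Measure.map_apply measurable_snd ht, ← hd₁,
      Measure.compProd_apply (measurable_snd ht)]
    rfl
  · ext t ht
    rw [Measure.map_apply measurable_snd ht,
      Measure.bind_apply (measurable_snd ht) (Kernel.measurable _).aemeasurable]
    have h1 : ∀ x, (κ₁ ×ₖ κ₂) x (Prod.snd ⁻¹' t) = κ₂ x t := by
      intro x
      rw [hprodx x, ← Measure.map_apply measurable_snd ht, ← Measure.snd,
        Measure.snd_prod]
    simp_rw [h1]
    rw [Measure.map_apply measurable_snd ht, ← hd₂,
      Measure.compProd_apply (measurable_snd ht)]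
    rfl
  · rw [Measure.lintegral_bind (Kernel.measurable _).aemeasurable hme.aemeasurable]
    have hin : ∀ x, ∫⁻ p, edist p.1 p.2 ∂((κ₁ ×ₖ κ₂) x) ≤
        (∫⁻ a, edist a x ∂(κ₁ x)) + ∫⁻ b, edist x b ∂(κ₂ x) := by
      intro x
      rw [hprodx x]
      calc ∫⁻ p, edist p.1 p.2 ∂((κ₁ x).prod (κ₂ x))
          ≤ ∫⁻ p, (edist p.1 x + edist x p.2) ∂((κ₁ x).prod (κ₂ x)) :=
            lintegral_mono fun p => edist_triangle _ _ _
        _ = (∫⁻ p, edist p.1 x ∂((κ₁ x).prod (κ₂ x))) +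
            ∫⁻ p, edist x p.2 ∂((κ₁ x).prod (κ₂ x)) :=
            lintegral_add_left (by fun_prop) _
        _ = (∫⁻ a, edist a x ∂(κ₁ x)) + ∫⁻ b, edist x b ∂(κ₂ x) := by
            congr 1
            · rw [MeasureTheory.lintegral_prod _ (by fun_prop)]
              simp
            · rw [MeasureTheory.lintegral_prod _ (by fun_prop)]
              simp only []
              rw [show (fun (x_1 : X) => ∫⁻ (y : X), edist x ((x_1, y) : X × X).2 ∂(κ₂ x)) =
                fun _ => ∫⁻ b, edist x b ∂(κ₂ x) from rfl]
              rw [lintegral_const, measure_univ, mul_one]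
    calc ∫⁻ x, ∫⁻ p, edist p.1 p.2 ∂((κ₁ ×ₖ κ₂) x) ∂m
        ≤ ∫⁻ x, ((∫⁻ a, edist a x ∂(κ₁ x)) + ∫⁻ b, edist x b ∂(κ₂ x)) ∂m :=
          lintegral_mono hin
      _ = (∫⁻ x, ∫⁻ a, edist a x ∂(κ₁ x) ∂m) + ∫⁻ x, ∫⁻ b, edist x b ∂(κ₂ x) ∂m :=
          lintegral_add_left (Measurable.lintegral_kernel_prod_right' (κ := κ₁)
            (f := fun q : X × X => edist q.2 q.1) (by fun_prop)) _
      _ = (∫⁻ q, edist q.2 q.1 ∂(m ⊗ₘ κ₁)) + ∫⁻ q, edist q.1 q.2 ∂(m ⊗ₘ κ₂) := by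
          rw [Measure.lintegral_compProd (by fun_prop), Measure.lintegral_compProd hme]
      _ = (∫⁻ p, edist p.1 p.2 ∂γ₁) + ∫⁻ p, edist p.1 p.2 ∂γ₂ := by
          rw [hd₁, hd₂, hρ₁, lintegral_map (by fun_prop) measurable_swap]
          rfl

end Couplings

end AuxLemmas

/-- The generalized Wasserstein distance satisfies the triangle inequality. -/
theorem dGW_triangle {X : Type*} [MetricSpace X] [CompactSpace X]
    [MeasurableSpace X] [BorelSpace X]
    (μ₁ μ₂ μ₃ : Measure X)
    [IsFiniteMeasure μ₁] [IsFiniteMeasure μ₂] [IsFiniteMeasure μ₃] :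
    dGW μ₁ μ₃ ≤ dGW μ₁ μ₂ + dGW μ₂ μ₃ := by
  rcases eq_or_ne (dGW μ₁ μ₂) ∞ with h12 | h12
  · rw [h12, top_add]; exact le_top
  rcases eq_or_ne (dGW μ₂ μ₃) ∞ with h23 | h23
  · rw [h23, add_top]; exact le_top
  cases isEmpty_or_nonempty X with
  | inl hX =>
    have hall : ∀ ν : Measure X, ν Set.univ = 0 := fun ν => by
      rw [Set.eq_empty_of_isEmpty (Set.univ : Set X)]
      simp
    have hW0 : W1 (0 : Measure X) 0 ≤ 0 := by
      have h0 : (0 : Measure (X × X)).map Prod.fst = 0 ∧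
          (0 : Measure (X × X)).map Prod.snd = 0 := by constructor <;> simp
      exact le_trans (iInf₂_le (0 : Measure (X × X)) h0) (by simp)
    have htv : ∀ ν : Measure X, tvDist ν 0 = 0 := by
      intro ν
      have h1 : (ν - 0) Set.univ = 0 :=
        le_antisymm ((Measure.sub_le (μ := ν) (ν := 0) Set.univ).trans (hall ν).le) zero_le
      have h2 : ((0 : Measure X) - ν) Set.univ = 0 := by
        rw [Measure.sub_eq_zero_of_le ν.zero_le]
        simp
      rw [tvDist, h1, h2, add_zero]
    have hd : dGW μ₁ μ₃ ≤ 0 := by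
      refine le_trans (le_trans (iInf₂_le (0 : Measure X) (0 : Measure X))
        (iInf_le _ rfl)) ?_
      rw [htv μ₁, htv μ₃]
      simpa using hW0
    exact le_trans hd zero_le
  | inr hX =>
  haveI : StandardBorelSpace X := inferInstance
  have hme : Measurable (fun p : X × X => edist p.1 p.2) := continuous_edist.measurable
  apply ENNReal.le_of_forall_pos_le_add
  intro ε hε _
  set δ : ℝ≥0∞ := (ε : ℝ≥0∞) / 4 with hδ
  have hδ0 : δ ≠ 0 := by
    rw [hδ, ne_eq, ENNReal.div_eq_zero_iff]
    rintro (h | h)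
    · exact hε.ne' (by exact_mod_cast h)
    · norm_num at h
  have hδtop : δ ≠ ∞ := by
    rw [hδ]
    exact (ENNReal.div_lt_top ENNReal.coe_ne_top (by norm_num)).ne
  have hδeq : 4 * δ = (ε : ℝ≥0∞) := ENNReal.mul_div_cancel' (by norm_num) (by norm_num)
  -- near-optimal witnesses
  have hopt12 : ∃ (z₁ z₂ : Measure X) (_ : z₁ Set.univ = z₂ Set.univ),
      tvDist μ₁ z₁ + W1 z₁ z₂ + tvDist μ₂ z₂ < dGW μ₁ μ₂ + δ := by
    by_contra hc
    push_neg at hc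
    exact (ENNReal.lt_add_right h12 hδ0).not_ge
      (le_iInf fun z₁ => le_iInf fun z₂ => le_iInf fun hz => hc z₁ z₂ hz)
  obtain ⟨z₁, z₂, hz, hzval⟩ := hopt12
  have hopt23 : ∃ (w₁ w₂ : Measure X) (_ : w₁ Set.univ = w₂ Set.univ),
      tvDist μ₂ w₁ + W1 w₁ w₂ + tvDist μ₃ w₂ < dGW μ₂ μ₃ + δ := by
    by_contra hc
    push_neg at hc
    exact (ENNReal.lt_add_right h23 hδ0).not_ge
      (le_iInf fun w₁ => le_iInf fun w₂ => le_iInf fun hw => hc w₁ w₂ hw)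
  obtain ⟨w₁, w₂, hw, hwval⟩ := hopt23
  -- finiteness of the witnesses
  have hsum12 : tvDist μ₁ z₁ + W1 z₁ z₂ + tvDist μ₂ z₂ ≠ ∞ :=
    (hzval.trans (lt_top_iff_ne_top.2 (ENNReal.add_ne_top.2 ⟨h12, hδtop⟩))).ne
  have hsum23 : tvDist μ₂ w₁ + W1 w₁ w₂ + tvDist μ₃ w₂ ≠ ∞ :=
    (hwval.trans (lt_top_iff_ne_top.2 (ENNReal.add_ne_top.2 ⟨h23, hδtop⟩))).ne
  have htv1 : tvDist μ₁ z₁ ≠ ∞ :=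
    ne_top_of_le_ne_top hsum12 (le_self_add.trans le_self_add)
  have hW12 : W1 z₁ z₂ ≠ ∞ :=
    ne_top_of_le_ne_top hsum12 (le_add_self.trans le_self_add)
  have htv2 : tvDist μ₂ z₂ ≠ ∞ := ne_top_of_le_ne_top hsum12 le_add_self
  have htv3 : tvDist μ₂ w₁ ≠ ∞ :=
    ne_top_of_le_ne_top hsum23 (le_self_add.trans le_self_add)
  have hW23 : W1 w₁ w₂ ≠ ∞ :=
    ne_top_of_le_ne_top hsum23 (le_add_self.trans le_self_add)
  have htv4 : tvDist μ₃ w₂ ≠ ∞ := ne_top_of_le_ne_top hsum23 le_add_self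
  haveI : IsFiniteMeasure z₁ := isFiniteMeasure_of_sub (ν := μ₁)
    (ne_top_of_le_ne_top htv1 le_add_self)
  haveI : IsFiniteMeasure z₂ := isFiniteMeasure_of_sub (ν := μ₂)
    (ne_top_of_le_ne_top htv2 le_add_self)
  haveI : IsFiniteMeasure w₁ := isFiniteMeasure_of_sub (ν := μ₂)
    (ne_top_of_le_ne_top htv3 le_add_self)
  haveI : IsFiniteMeasure w₂ := isFiniteMeasure_of_sub (ν := μ₃)
    (ne_top_of_le_ne_top htv4 le_add_self)
  -- near-optimal couplings
  have hcpl12 : ∃ γ : Measure (X × X), (γ.map Prod.fst = z₁ ∧ γ.map Prod.snd = z₂) ∧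
      ∫⁻ p, edist p.1 p.2 ∂γ < W1 z₁ z₂ + δ := by
    by_contra hc
    push_neg at hc
    exact (ENNReal.lt_add_right hW12 hδ0).not_ge
      (le_iInf fun γ => le_iInf fun hγ => hc γ hγ)
  obtain ⟨γ₁, ⟨hγ₁f, hγ₁s⟩, hγ₁c⟩ := hcpl12
  have hcpl23 : ∃ γ : Measure (X × X), (γ.map Prod.fst = w₁ ∧ γ.map Prod.snd = w₂) ∧
      ∫⁻ p, edist p.1 p.2 ∂γ < W1 w₁ w₂ + δ := by
    by_contra hc
    push_neg at hc
    exact (ENNReal.lt_add_right hW23 hδ0).not_ge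
      (le_iInf fun γ => le_iInf fun hγ => hc γ hγ)
  obtain ⟨γ₂, ⟨hγ₂f, hγ₂s⟩, hγ₂c⟩ := hcpl23
  haveI : IsFiniteMeasure γ₁ := by
    constructor
    have h1 : γ₁ Set.univ = z₁ Set.univ := by
      rw [← hγ₁f, Measure.map_apply measurable_fst MeasurableSet.univ, Set.preimage_univ]
    rw [h1]
    exact measure_lt_top z₁ _
  haveI : IsFiniteMeasure γ₂ := by
    constructor
    have h1 : γ₂ Set.univ = w₁ Set.univ := by
      rw [← hγ₂f, Measure.map_apply measurable_fst MeasurableSet.univ, Set.preimage_univ]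
    rw [h1]
    exact measure_lt_top w₁ _
  -- common sub-measure of z₂ and w₁
  obtain ⟨m, hmz₂, hmw₁, hmass2, hmass1⟩ := exists_min_measure z₂ w₁
  -- restrict couplings
  have hm1 : m ≤ γ₁.map Prod.snd := hγ₁s ▸ hmz₂
  obtain ⟨γ₁', hγ₁'le, hγ₁'snd, _⟩ := coupling_restrict γ₁ hm1
  haveI : IsFiniteMeasure (γ₂.map Prod.swap) := by
    constructor
    rw [Measure.map_apply measurable_swap MeasurableSet.univ, Set.preimage_univ]
    exact measure_lt_top γ₂ _
  have hm2 : m ≤ (γ₂.map Prod.swap).map Prod.snd := by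
    rw [Measure.map_map measurable_snd measurable_swap]
    have h1 : (Prod.snd ∘ Prod.swap : X × X → X) = Prod.fst := rfl
    rw [h1, hγ₂f]
    exact hmw₁
  obtain ⟨d₂, hd₂le, hd₂snd, _⟩ := coupling_restrict (γ₂.map Prod.swap) hm2
  set γ₂' := d₂.map Prod.swap with hγ₂'def
  have hγ₂'fst : γ₂'.map Prod.fst = m := by
    rw [hγ₂'def, Measure.map_map measurable_fst measurable_swap]
    have h1 : (Prod.fst ∘ Prod.swap : X × X → X) = Prod.snd := rfl
    rw [h1, hd₂snd]
  have hz₁'le : γ₁'.map Prod.fst ≤ z₁ := hγ₁f ▸ Measure.map_mono hγ₁'le measurable_fst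
  have hw₂'le : γ₂'.map Prod.snd ≤ w₂ := by
    rw [hγ₂'def, Measure.map_map measurable_snd measurable_swap]
    have h1 : (Prod.snd ∘ Prod.swap : X × X → X) = Prod.fst := rfl
    rw [h1]
    calc d₂.map Prod.fst ≤ (γ₂.map Prod.swap).map Prod.fst :=
          Measure.map_mono hd₂le measurable_fst
      _ = γ₂.map Prod.snd := by
          rw [Measure.map_map measurable_fst measurable_swap]
          rfl
      _ = w₂ := hγ₂s
  haveI : IsFiniteMeasure γ₁' := isFiniteMeasure_of_le γ₁ hγ₁'le
  haveI : IsFiniteMeasure d₂ := isFiniteMeasure_of_le (γ₂.map Prod.swap) hd₂le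
  haveI : IsFiniteMeasure γ₂' := by
    rw [hγ₂'def]
    constructor
    rw [Measure.map_apply measurable_swap MeasurableSet.univ, Set.preimage_univ]
    exact measure_lt_top d₂ _
  -- glue the two restricted couplings
  obtain ⟨η, hηf, hηs, hηc⟩ := coupling_glue γ₁' γ₂' hme (by rw [hγ₁'snd, hγ₂'fst])
  -- cost comparisons
  have hc₁' : ∫⁻ p, edist p.1 p.2 ∂γ₁' ≤ ∫⁻ p, edist p.1 p.2 ∂γ₁ :=
    lintegral_mono' hγ₁'le le_rfl
  have hc₂' : ∫⁻ p, edist p.1 p.2 ∂γ₂' ≤ ∫⁻ p, edist p.1 p.2 ∂γ₂ := by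
    rw [hγ₂'def, lintegral_map (by fun_prop) measurable_swap]
    simp only [Prod.fst_swap, Prod.snd_swap]
    calc ∫⁻ q, edist q.2 q.1 ∂d₂ ≤ ∫⁻ q, edist q.2 q.1 ∂(γ₂.map Prod.swap) :=
          lintegral_mono' hd₂le le_rfl
      _ = ∫⁻ p, edist p.1 p.2 ∂γ₂ := by
          rw [lintegral_map (by fun_prop) measurable_swap]
          simp only [Prod.fst_swap, Prod.snd_swap]
  -- total masses
  have hz₁'univ : (γ₁'.map Prod.fst) Set.univ = m Set.univ := by
    rw [Measure.map_apply measurable_fst MeasurableSet.univ, Set.preimage_univ, ← hγ₁'snd,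
      Measure.map_apply measurable_snd MeasurableSet.univ, Set.preimage_univ]
  have hw₂'univ : (γ₂'.map Prod.snd) Set.univ = m Set.univ := by
    rw [Measure.map_apply measurable_snd MeasurableSet.univ, Set.preimage_univ, ← hγ₂'fst,
      Measure.map_apply measurable_fst MeasurableSet.univ, Set.preimage_univ]
  have hmasseq : (γ₁'.map Prod.fst) Set.univ = (γ₂'.map Prod.snd) Set.univ := by
    rw [hz₁'univ, hw₂'univ]
  -- apply the infimum definitions
  have happ : dGW μ₁ μ₃ ≤ tvDist μ₁ (γ₁'.map Prod.fst) +
      W1 (γ₁'.map Prod.fst) (γ₂'.map Prod.snd) + tvDist μ₃ (γ₂'.map Prod.snd) :=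
    le_trans (iInf₂_le (γ₁'.map Prod.fst) (γ₂'.map Prod.snd)) (iInf_le _ hmasseq)
  have hW1b : W1 (γ₁'.map Prod.fst) (γ₂'.map Prod.snd) ≤ ∫⁻ p, edist p.1 p.2 ∂η :=
    iInf₂_le η ⟨hηf, hηs⟩
  -- total variation bounds
  have htvb1 : tvDist μ₁ (γ₁'.map Prod.fst) ≤
      tvDist μ₁ z₁ + (z₁ Set.univ - m Set.univ) := by
    have h1 := tvDist_shrink μ₁ hz₁'le
    rwa [hz₁'univ] at h1
  have htvb2 : tvDist μ₃ (γ₂'.map Prod.snd) ≤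
      tvDist μ₃ w₂ + (w₂ Set.univ - m Set.univ) := by
    have h1 := tvDist_shrink μ₃ hw₂'le
    rwa [hw₂'univ] at h1
  have hd1 : z₁ Set.univ - m Set.univ ≤ (z₂ - w₁) Set.univ := by
    rw [hz]
    exact tsub_le_iff_right.2 hmass2
  have hd2 : w₂ Set.univ - m Set.univ ≤ (w₁ - z₂) Set.univ := by
    rw [← hw]
    exact tsub_le_iff_right.2 hmass1
  have hT : (z₂ - w₁) Set.univ + (w₁ - z₂) Set.univ ≤ tvDist μ₂ z₂ + tvDist μ₂ w₁ := by
    calc (z₂ - w₁) Set.univ + (w₁ - z₂) Set.univ = tvDist z₂ w₁ := rfl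
      _ ≤ tvDist z₂ μ₂ + tvDist μ₂ w₁ := tvDist_triangle z₂ μ₂ w₁
      _ = tvDist μ₂ z₂ + tvDist μ₂ w₁ := by rw [tvDist_comm]
  -- put everything together
  calc dGW μ₁ μ₃
      ≤ tvDist μ₁ (γ₁'.map Prod.fst) + W1 (γ₁'.map Prod.fst) (γ₂'.map Prod.snd) +
        tvDist μ₃ (γ₂'.map Prod.snd) := happ
    _ ≤ (tvDist μ₁ z₁ + (z₂ - w₁) Set.univ) +
        ((∫⁻ p, edist p.1 p.2 ∂γ₁) + ∫⁻ p, edist p.1 p.2 ∂γ₂) +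
        (tvDist μ₃ w₂ + (w₁ - z₂) Set.univ) := by
        refine add_le_add (add_le_add ?_ ?_) ?_
        · exact htvb1.trans (add_le_add_right hd1 _)
        · exact hW1b.trans (hηc.trans (add_le_add hc₁' hc₂'))
        · exact htvb2.trans (add_le_add_right hd2 _)
    _ ≤ (tvDist μ₁ z₁ + (z₂ - w₁) Set.univ) + ((W1 z₁ z₂ + δ) + (W1 w₁ w₂ + δ)) +
        (tvDist μ₃ w₂ + (w₁ - z₂) Set.univ) := by
        gcongr
    _ = ((tvDist μ₁ z₁ + W1 z₁ z₂) + (W1 w₁ w₂ + tvDist μ₃ w₂) +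
        ((z₂ - w₁) Set.univ + (w₁ - z₂) Set.univ)) + 2*δ := by ring
    _ ≤ ((tvDist μ₁ z₁ + W1 z₁ z₂) + (W1 w₁ w₂ + tvDist μ₃ w₂) +
        (tvDist μ₂ z₂ + tvDist μ₂ w₁)) + 2*δ := by gcongr
    _ = (tvDist μ₁ z₁ + W1 z₁ z₂ + tvDist μ₂ z₂) +
        (tvDist μ₂ w₁ + W1 w₁ w₂ + tvDist μ₃ w₂) + 2*δ := by ring
    _ ≤ (dGW μ₁ μ₂ + δ) + (dGW μ₂ μ₃ + δ) + 2*δ :=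
        add_le_add (add_le_add hzval.le hwval.le) le_rfl
    _ = dGW μ₁ μ₂ + dGW μ₂ μ₃ + 4*δ := by ring
    _ = dGW μ₁ μ₂ + dGW μ₂ μ₃ + ε := by rw [hδeq]
end

section
/- Let d ≥ 2 and K ≥ 2 be integers. Over all partitions a_1 + ... + a_p = l with 1 ≤ l ≤ d, a_i ≥ 1, 1 ≤ p ≤ min(l, K), the minimum of (d − a_1)·...·(d − a_p)·d^(K−p) over all valid l, p, and partitions with not all parts forcing the product to zero (i.e., each a_i ≤ d − 1 when l < d, or the partition has p ≥ 2 when l = d) equals (d − 1)·d^(K−2), attained at l = d, p = 2, (a_1, a_2) = (1, d−1). -/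
/-- First partition lemma: `(d - ∑ aᵢ) · d^p ≤ ∏ (d - aᵢ)` over `p+1` parts. -/
lemma partition_key (d : ℕ) : ∀ (p : ℕ) (a : Fin (p + 1) → ℕ),
    (d - ∑ i, a i) * d ^ p ≤ ∏ i, (d - a i) := by
  intro p
  induction p with
  | zero => intro a; simp
  | succ n ih =>
    intro a
    rw [Fin.sum_univ_succ, Fin.prod_univ_succ]
    set s := ∑ i : Fin (n + 1), a i.succ with hs
    set x := d - a 0 with hx
    have hxd : x ≤ d := Nat.sub_le _ _
    have step : (x - s) * d ≤ x * (d - s) := by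
      calc (x - s) * d = x * d - s * d := Nat.sub_mul _ _ _
        _ ≤ x * d - x * s := by
            apply Nat.sub_le_sub_left
            calc x * s ≤ d * s := Nat.mul_le_mul_right _ hxd
              _ = s * d := Nat.mul_comm _ _
        _ = x * (d - s) := by rw [Nat.mul_sub]
    have ihs := ih (fun i => a i.succ)
    calc (d - (a 0 + s)) * d ^ (n + 1)
        = ((x - s) * d) * d ^ n := by
          rw [Nat.sub_add_eq, pow_succ]; ring
      _ ≤ (x * (d - s)) * d ^ n := Nat.mul_le_mul_right _ step
      _ = x * ((d - s) * d ^ n) := by ring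
      _ ≤ x * ∏ i : Fin (n + 1), (d - a i.succ) := Nat.mul_le_mul_left _ ihs

/-- `d - 1 ≤ (d - x) * x` for `1 ≤ x ≤ d - 1`. -/
lemma partition_key2 (d x : ℕ) (h1 : 1 ≤ x) (h2 : x + 1 ≤ d) :
    d - 1 ≤ (d - x) * x := by
  obtain ⟨y, hy⟩ : ∃ y, d - x = y + 1 := ⟨d - x - 1, by omega⟩
  obtain ⟨z, hz⟩ : ∃ z, x = z + 1 := ⟨x - 1, by omega⟩
  have hm : (d - x) * x = y * z + y + z + 1 := by rw [hy, hz]; ring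
  omega

/-- For `d ≥ 2` and `K ≥ 2`: over all partitions `a 0 + ... + a (p-1) = l` with
`1 ≤ l ≤ d`, `a i ≥ 1`, `1 ≤ p ≤ min l K`, and `p ≥ 2` when `l = d`
(each `a i ≤ d - 1` being automatic when `l < d`), the quantity
`(∏ i, (d - a i)) * d^(K - p)` is at least `(d - 1) * d^(K - 2)`, and this
value is attained at `l = d`, `p = 2`, `(a 0, a 1) = (1, d - 1)`. -/
theorem partition_product_min
    (d K : ℕ) (hd : 2 ≤ d) (hK : 2 ≤ K) :
    (∀ (l p : ℕ) (a : Fin p → ℕ),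
      1 ≤ l → l ≤ d → 1 ≤ p → p ≤ min l K →
      (∀ i, 1 ≤ a i) → (∑ i, a i = l) →
      (l = d → 2 ≤ p) →
      (d - 1) * d ^ (K - 2) ≤ (∏ i, (d - a i)) * d ^ (K - p)) ∧
    (∃ (l p : ℕ) (a : Fin p → ℕ),
      1 ≤ l ∧ l ≤ d ∧ 1 ≤ p ∧ p ≤ min l K ∧
      (∀ i, 1 ≤ a i) ∧ (∑ i, a i = l) ∧
      (l = d → 2 ≤ p) ∧
      (∏ i, (d - a i)) * d ^ (K - p) = (d - 1) * d ^ (K - 2)) := by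
  constructor
  · intro l p a hl1 hld hp1 hpmin ha hsum hldp
    have hpK : p ≤ K := le_trans hpmin (min_le_right _ _)
    by_cases hcase : l = d
    · -- l = d, p ≥ 2
      have hp2 : 2 ≤ p := hldp hcase
      obtain ⟨q, rfl⟩ : ∃ q, p = q + 2 := ⟨p - 2, by omega⟩
      rw [Fin.sum_univ_succ] at hsum
      rw [Fin.prod_univ_succ]
      set s := ∑ i : Fin (q + 1), a i.succ with hsdef
      have hs1 : 1 ≤ s := by
        have := Finset.single_le_sum (f := fun i : Fin (q + 1) => a i.succ)
          (fun i _ => Nat.zero_le _) (Finset.mem_univ 0)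
        exact le_trans (ha _) this
      have ha0 : a 0 + 1 ≤ d := by omega
      have ha01 : 1 ≤ a 0 := ha 0
      have key := partition_key d q (fun i => a i.succ)
      have hds : d - s = a 0 := by omega
      rw [hds] at key
      have hprod : (d - a 0) * a 0 * d ^ q ≤
          (d - a 0) * ∏ i : Fin (q + 1), (d - a i.succ) := by
        calc (d - a 0) * a 0 * d ^ q = (d - a 0) * (a 0 * d ^ q) := by ring
          _ ≤ _ := Nat.mul_le_mul_left _ key
      have hstep : (d - 1) * d ^ q ≤ (d - a 0) * a 0 * d ^ q :=
        Nat.mul_le_mul_right _ (partition_key2 d (a 0) ha01 ha0)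
      calc (d - 1) * d ^ (K - 2)
          = (d - 1) * d ^ q * d ^ (K - (q + 2)) := by
            rw [mul_assoc, ← pow_add]
            congr 2
            omega
        _ ≤ (d - a 0) * a 0 * d ^ q * d ^ (K - (q + 2)) :=
            Nat.mul_le_mul_right _ hstep
        _ ≤ ((d - a 0) * ∏ i : Fin (q + 1), (d - a i.succ)) * d ^ (K - (q + 2)) :=
            Nat.mul_le_mul_right _ hprod
    · -- l < d
      have hlt : l < d := lt_of_le_of_ne hld hcase
      obtain ⟨q, rfl⟩ : ∃ q, p = q + 1 := ⟨p - 1, by omega⟩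
      have key := partition_key d q a
      rw [hsum] at key
      have h1 : d ^ q ≤ (d - l) * d ^ q :=
        le_mul_of_one_le_left (Nat.zero_le _) (by omega)
      calc (d - 1) * d ^ (K - 2)
          ≤ d * d ^ (K - 2) := Nat.mul_le_mul_right _ (Nat.sub_le _ _)
        _ = d ^ (K - 1) := by rw [← pow_succ']; congr 1; omega
        _ = d ^ q * d ^ (K - (q + 1)) := by rw [← pow_add]; congr 1; omega
        _ ≤ ((d - l) * d ^ q) * d ^ (K - (q + 1)) := Nat.mul_le_mul_right _ h1
        _ ≤ (∏ i, (d - a i)) * d ^ (K - (q + 1)) := Nat.mul_le_mul_right _ key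
  · refine ⟨d, 2, ![1, d - 1], by omega, le_rfl, by omega, by omega, ?_, ?_, fun _ => le_rfl, ?_⟩
    · intro i
      fin_cases i <;> simp <;> omega
    · simp [Fin.sum_univ_two]; omega
    · rw [Fin.prod_univ_two]
      simp only [Matrix.cons_val_zero, Matrix.cons_val_one, Matrix.head_cons]
      rw [show d - (d - 1) = 1 by omega]
      ring
end

section
/- Let μ = Σ_{k=1}^K a_k δ_{θ_k} be a nonnegative atomic measure on [0,1]^d with all a_k > 0 and Θ = {θ_1,...,θ_K} distinct points. Suppose Ψ : [0,1]^d → ℝ^N is continuous, the matrix [Ψ(θ_k)]_{k∈[K]} ∈ ℝ^{N×K} has full column rank, and there exists b ∈ ℝ^N with Q(θ) := ⟨b, Ψ(θ)⟩ ≥ 0 on [0,1]^d and Q(θ) = 0 exactly on Θ. Then μ is the unique nonnegative Borel measure ν on [0,1]^d satisfying ∫ Ψ dν = ∫ Ψ dμ. -/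
open MeasureTheory

/-- The unit cube `[0,1]^d` inside `ℝ^d`. -/
def unitCube (d : ℕ) : Set (EuclideanSpace ℝ (Fin d)) :=
  {x | ∀ i, x i ∈ Set.Icc (0 : ℝ) 1}

lemma isCompact_unitCube (d : ℕ) : IsCompact (unitCube d) := by
  have h : unitCube d = (EuclideanSpace.equiv (Fin d) ℝ) ⁻¹'
      Set.pi Set.univ (fun _ : Fin d => Set.Icc (0:ℝ) 1) := by
    ext x; exact (Set.mem_univ_pi).symm
  rw [h]
  exact (EuclideanSpace.equiv (Fin d) ℝ).toHomeomorph.isCompact_preimage.mpr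
    (isCompact_univ_pi (fun _ => isCompact_Icc))

lemma integrable_of_cube {d N : ℕ} (Ψ : EuclideanSpace ℝ (Fin d) → EuclideanSpace ℝ (Fin N))
    (hΨ : Continuous Ψ) (ν : Measure (EuclideanSpace ℝ (Fin d))) [IsFiniteMeasure ν]
    (hν : ν (unitCube d)ᶜ = 0) : Integrable Ψ ν := by
  have hne : (unitCube d).Nonempty := ⟨0, fun i => by simp⟩
  obtain ⟨z, hz, hmax⟩ := (isCompact_unitCube d).exists_isMaxOn hne
    ((continuous_norm.comp hΨ).continuousOn)
  refine Integrable.mono' (integrable_const (‖Ψ z‖)) hΨ.aestronglyMeasurable ?_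
  have : ∀ᵐ x ∂ν, x ∈ unitCube d := by
    rw [MeasureTheory.ae_iff]; exact hν
  filter_upwards [this] with x hx using hmax hx

lemma integrable_dirac' {α E : Type*} [MeasurableSpace α] [MeasurableSingletonClass α]
    [NormedAddCommGroup E] (f : α → E) (a : α) : Integrable f (Measure.dirac a) := by
  have h : f =ᵐ[Measure.dirac a] (fun _ => f a) := by
    rw [MeasureTheory.ae_dirac_eq]
    exact Filter.eventually_pure.mpr rfl
  exact (integrable_const (f a)).congr h.symm

/-- Uniqueness of the sparse measure: let `μ = Σ_k a_k δ_{θ_k}` with `a_k > 0`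
and distinct `θ_k ∈ [0,1]^d`. Suppose `Ψ : [0,1]^d → ℝ^N` is continuous, the
vectors `Ψ(θ_k)` are linearly independent (full column rank), and there is
`b ∈ ℝ^N` with `Q θ = ⟨b, Ψ θ⟩ ≥ 0` on `[0,1]^d`, vanishing exactly on
`{θ_1, ..., θ_K}`. Then `μ` is the unique nonnegative (finite) Borel measure
`ν` supported on `[0,1]^d` with `∫ Ψ dν = ∫ Ψ dμ`. -/
theorem sparse_measure_unique
    {d N K : ℕ} (θ : Fin K → EuclideanSpace ℝ (Fin d))
    (hθdist : Function.Injective θ)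
    (hθcube : ∀ k, θ k ∈ unitCube d)
    (a : Fin K → ℝ) (ha : ∀ k, 0 < a k)
    (Ψ : EuclideanSpace ℝ (Fin d) → EuclideanSpace ℝ (Fin N))
    (hΨ : Continuous Ψ)
    (hrank : LinearIndependent ℝ (fun k => Ψ (θ k)))
    (b : EuclideanSpace ℝ (Fin N))
    (hQ0 : ∀ x ∈ unitCube d, (0 : ℝ) ≤ inner ℝ b (Ψ x))
    (hQvanish : ∀ x ∈ unitCube d, (inner ℝ b (Ψ x) = (0 : ℝ) ↔ ∃ k, x = θ k)) :
    ∀ ν : Measure (EuclideanSpace ℝ (Fin d)), IsFiniteMeasure ν →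
      ν (unitCube d)ᶜ = 0 →
      (∫ x, Ψ x ∂ν) = (∫ x, Ψ x ∂(∑ k, ENNReal.ofReal (a k) • Measure.dirac (θ k))) →
      ν = ∑ k, ENNReal.ofReal (a k) • Measure.dirac (θ k) := by
  intro ν hνfin hνcube hint
  set μ : Measure (EuclideanSpace ℝ (Fin d)) :=
    ∑ k, ENNReal.ofReal (a k) • Measure.dirac (θ k) with hμdef
  -- μ is finite
  haveI hμfin : IsFiniteMeasure μ := by
    constructor
    rw [hμdef]
    rw [Measure.finset_sum_apply]
    have : ∀ k ∈ Finset.univ, (ENNReal.ofReal (a k) • Measure.dirac (θ k)) Set.univ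
        = ENNReal.ofReal (a k) := by
      intro k _
      simp [Measure.smul_apply]
    rw [Finset.sum_congr rfl this]
    exact ENNReal.sum_lt_top.mpr (fun k _ => ENNReal.ofReal_lt_top)
  have hμcube : μ (unitCube d)ᶜ = 0 := by
    rw [hμdef, Measure.finset_sum_apply]
    refine Finset.sum_eq_zero (fun k _ => ?_)
    simp [Measure.smul_apply, Measure.dirac_apply, Set.indicator_apply, hθcube k]
  -- integrability
  have hintν : Integrable Ψ ν := integrable_of_cube Ψ hΨ ν hνcube
  have hintμ : Integrable Ψ μ := integrable_of_cube Ψ hΨ μ hμcube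
  -- each component of μ
  have hintk : ∀ k : Fin K, Integrable Ψ (ENNReal.ofReal (a k) • Measure.dirac (θ k)) := by
    intro k
    exact (integrable_dirac' Ψ (θ k)).smul_measure ENNReal.ofReal_ne_top
  -- Q := ⟨b, Ψ ·⟩, ∫ Q dμ = 0
  have hQμ : ∫ x, (inner ℝ b (Ψ x) : ℝ) ∂μ = 0 := by
    rw [hμdef, integral_finset_sum_measure (fun k _ => (hintk k).const_inner b)]
    refine Finset.sum_eq_zero (fun k _ => ?_)
    rw [integral_smul_measure, integral_dirac]
    rw [(hQvanish (θ k) (hθcube k)).mpr ⟨k, rfl⟩]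
    simp
  have hQν : ∫ x, (inner ℝ b (Ψ x) : ℝ) ∂ν = 0 := by
    rw [integral_inner hintν b, hint, ← integral_inner hintμ b, hQμ]
  -- a.e. membership in cube
  have haecube : ∀ᵐ x ∂ν, x ∈ unitCube d := by
    rw [MeasureTheory.ae_iff]; exact hνcube
  -- Q = 0 a.e.
  have hQae : (fun x => (inner ℝ b (Ψ x) : ℝ)) =ᵐ[ν] 0 := by
    refine (integral_eq_zero_iff_of_nonneg_ae ?_ (hintν.const_inner b)).mp hQν
    filter_upwards [haecube] with x hx using hQ0 x hx
  -- ν lives on range θ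
  have hrange : ν (Set.range θ)ᶜ = 0 := by
    have : ∀ᵐ x ∂ν, x ∈ Set.range θ := by
      filter_upwards [haecube, hQae] with x hx hqx
      obtain ⟨k, hk⟩ := (hQvanish x hx).mp hqx
      exact ⟨k, hk.symm⟩
    rw [MeasureTheory.ae_iff] at this
    simpa [Set.compl_def] using this
  -- ν is a sum of diracs
  have hν_eq : ν = ∑ k, ν {θ k} • Measure.dirac (θ k) := by
    ext s hs
    rw [Measure.finset_sum_apply]
    have h1 : ν s = ν (s ∩ Set.range θ) := (measure_inter_conull hrange).symm
    have h2 : s ∩ Set.range θ = ⋃ k ∈ Finset.univ, s ∩ {θ k} := by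
      ext x
      constructor
      · rintro ⟨hx, k, rfl⟩
        exact Set.mem_biUnion (Finset.mem_univ k) ⟨hx, rfl⟩
      · intro hx
        obtain ⟨k, -, hxk⟩ := Set.mem_iUnion₂.mp hx
        exact ⟨hxk.1, k, (Set.mem_singleton_iff.mp hxk.2).symm⟩
    have h3 : ν (⋃ k ∈ Finset.univ, s ∩ {θ k}) = ∑ k, ν (s ∩ {θ k}) := by
      refine measure_biUnion_finset ?_ (fun k _ => hs.inter (measurableSet_singleton _))
      intro i _ j _ hij
      refine Set.disjoint_left.mpr (fun x hxi hxj => ?_)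
      exact hij (hθdist ((Set.mem_singleton_iff.mp hxi.2).symm.trans
        (Set.mem_singleton_iff.mp hxj.2)))
    rw [h1, h2, h3]
    refine Finset.sum_congr rfl (fun k _ => ?_)
    rw [Measure.smul_apply, Measure.dirac_apply, smul_eq_mul]
    by_cases hks : θ k ∈ s
    · have : s ∩ {θ k} = {θ k} := by
        apply Set.inter_eq_self_of_subset_right
        simpa using hks
      rw [this]
      simp [Set.indicator_apply, hks]
    · have : s ∩ {θ k} = ∅ := by
        ext x; simp only [Set.mem_inter_iff, Set.mem_singleton_iff, Set.mem_empty_iff_false,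
          iff_false, not_and]
        rintro hx rfl; exact hks hx
      rw [this]
      simp [Set.indicator_apply, hks]
  -- compute the two integrals
  have hνk : ∀ k : Fin K, ν {θ k} ≠ ⊤ := fun k => measure_ne_top ν _
  have hintνk : ∀ k : Fin K, Integrable Ψ (ν {θ k} • Measure.dirac (θ k)) := by
    intro k
    exact (integrable_dirac' Ψ (θ k)).smul_measure (hνk k)
  have hIν : (∫ x, Ψ x ∂ν) = ∑ k, (ν {θ k}).toReal • Ψ (θ k) := by
    conv_lhs => rw [hν_eq]
    rw [integral_finset_sum_measure (fun k _ => hintνk k)]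
    refine Finset.sum_congr rfl (fun k _ => ?_)
    rw [integral_smul_measure, integral_dirac]
  have hIμ : (∫ x, Ψ x ∂μ) = ∑ k, a k • Ψ (θ k) := by
    rw [hμdef, integral_finset_sum_measure (fun k _ => hintk k)]
    refine Finset.sum_congr rfl (fun k _ => ?_)
    rw [integral_smul_measure, integral_dirac, ENNReal.toReal_ofReal (ha k).le]
  -- linear independence gives coefficient identity
  have hcoef : ∀ k, (ν {θ k}).toReal = a k := by
    have hsum : ∑ k, ((ν {θ k}).toReal - a k) • Ψ (θ k) = 0 := by
      have := hint
      rw [hIν, hIμ] at this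
      simp only [sub_smul]
      rw [Finset.sum_sub_distrib, this, sub_self]
    intro k
    have := Fintype.linearIndependent_iff.mp hrank (fun k => (ν {θ k}).toReal - a k) hsum k
    linarith
  -- conclude
  conv_lhs => rw [hν_eq]
  refine Finset.sum_congr rfl (fun k _ => ?_)
  congr 1
  rw [← hcoef k, ENNReal.ofReal_toReal (hνk k)]
end
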